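/- Let A ∈ ℂ^{n×m} and 𝒜(X) = diag(A* X A). The operator norm of 𝒜 (from Hermitian matrices with Frobenius norm to ℝ^m with Euclidean norm) satisfies ‖𝒜‖ = √(‖A*A ∘ conj(A*A)‖₂), where ‖·‖₂ is the spectral norm. -/

import Mathlib

open Matrix

noncomputable def frob {n : ℕ} (X : Matrix (Fin n) (Fin n) ℂ) : ℝ :=
  Real.sqrt ((Xᴴ * X).trace.re)

noncomputable def enorm {m : ℕ} (v : Fin m → ℝ) : ℝ :=
  Real.sqrt (∑ i, (v i) ^ 2)

/-- Operator norm of `X ↦ diag(AᴴXA)` from Hermitian matrices (Frobenius norm)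
to `ℝ^m` (Euclidean norm). -/
noncomputable def opNormA {n m : ℕ} (A : Matrix (Fin n) (Fin m) ℂ) : ℝ :=
  sSup {t : ℝ | ∃ X : Matrix (Fin n) (Fin n) ℂ, X.IsHermitian ∧ X ≠ 0 ∧
    t = _root_.enorm (fun i => ((Aᴴ * X * A) i i).re) / frob X}

noncomputable def MM {n m : ℕ} (A : Matrix (Fin n) (Fin m) ℂ) (y : Fin m → ℝ) :
    Matrix (Fin n) (Fin n) ℂ :=
  A * Matrix.diagonal (fun i => (y i : ℂ)) * Aᴴ

lemma MM_isHermitian {n m : ℕ} (A : Matrix (Fin n) (Fin m) ℂ) (y : Fin m → ℝ) :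
    (MM A y).IsHermitian := by
  unfold MM
  unfold Matrix.IsHermitian
  have h : (star fun i => ((y i : ℂ))) = fun i => ((y i : ℂ)) := by
    funext i; exact Complex.conj_ofReal _
  rw [conjTranspose_mul, conjTranspose_mul, conjTranspose_conjTranspose,
    diagonal_conjTranspose, h, Matrix.mul_assoc]

lemma trace_MM_mul {n m : ℕ} (A : Matrix (Fin n) (Fin m) ℂ) (y : Fin m → ℝ)
    (X : Matrix (Fin n) (Fin n) ℂ) :
    ((MM A y)ᴴ * X).trace = ∑ i, (y i : ℂ) * ((Aᴴ * X * A) i i) := by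
  rw [(MM_isHermitian A y).eq]
  unfold MM
  rw [Matrix.mul_assoc (A * _), Matrix.trace_mul_comm, Matrix.mul_assoc, Matrix.mul_assoc,
    ← Matrix.mul_assoc, ← Matrix.mul_assoc]
  rw [Matrix.trace_mul_comm]
  simp [Matrix.trace, Matrix.diag, Matrix.mul_diagonal, mul_comm, Matrix.mul_assoc]

lemma AMMA {n m : ℕ} (A : Matrix (Fin n) (Fin m) ℂ) (y : Fin m → ℝ) :
    Aᴴ * MM A y * A = (Aᴴ * A) * Matrix.diagonal (fun i => (y i : ℂ)) * (Aᴴ * A) := by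
  unfold MM
  simp only [Matrix.mul_assoc]

lemma diag_AMMA {n m : ℕ} (A : Matrix (Fin n) (Fin m) ℂ) (y : Fin m → ℝ) (i : Fin m) :
    (Aᴴ * MM A y * A) i i
      = ∑ j, (y j : ℂ) * (hadamard (Aᴴ * A) ((Aᴴ * A).map (starRingEnd ℂ))) i j := by
  rw [AMMA]
  have hG : (Aᴴ * A)ᴴ = Aᴴ * A := (isHermitian_conjTranspose_mul_self A).eq
  rw [Matrix.mul_apply]
  refine Finset.sum_congr rfl fun j _ => ?_
  rw [Matrix.mul_diagonal, Matrix.hadamard_apply, Matrix.map_apply]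
  have : (Aᴴ * A) j i = (starRingEnd ℂ) ((Aᴴ * A) i j) := by
    conv_lhs => rw [← hG]
    rfl
  rw [this]; ring

lemma trace_MM_sq {n m : ℕ} (A : Matrix (Fin n) (Fin m) ℂ) (y : Fin m → ℝ) :
    ((MM A y)ᴴ * MM A y).trace
      = ∑ i, ∑ j, (y i : ℂ) * ((y j : ℂ) *
          (hadamard (Aᴴ * A) ((Aᴴ * A).map (starRingEnd ℂ))) i j) := by
  rw [trace_MM_mul]
  refine Finset.sum_congr rfl fun i _ => ?_
  rw [diag_AMMA, Finset.mul_sum]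

noncomputable def BMat {n m : ℕ} (A : Matrix (Fin n) (Fin m) ℂ) : Matrix (Fin m) (Fin m) ℂ :=
  hadamard (Aᴴ * A) ((Aᴴ * A).map (starRingEnd ℂ))

lemma BMat_apply {n m : ℕ} (A : Matrix (Fin n) (Fin m) ℂ) (i j : Fin m) :
    BMat A i j = (Complex.normSq ((Aᴴ * A) i j) : ℂ) := by
  rw [BMat, Matrix.hadamard_apply, Matrix.map_apply, Complex.mul_conj]

lemma BMat_isHermitian {n m : ℕ} (A : Matrix (Fin n) (Fin m) ℂ) : (BMat A).IsHermitian := by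
  have hG : (Aᴴ * A)ᴴ = Aᴴ * A := (isHermitian_conjTranspose_mul_self A).eq
  unfold Matrix.IsHermitian
  ext i j
  rw [conjTranspose_apply, BMat_apply, BMat_apply]
  rw [show (star ((Complex.normSq ((Aᴴ * A) j i) : ℝ) : ℂ)) = ((Complex.normSq ((Aᴴ * A) j i) : ℝ) : ℂ) from Complex.conj_ofReal _]
  congr 1
  have : (Aᴴ * A) j i = (starRingEnd ℂ) ((Aᴴ * A) i j) := by
    conv_lhs => rw [← hG]
    rfl
  rw [this, Complex.normSq_conj]

noncomputable def QF {n m : ℕ} (A : Matrix (Fin n) (Fin m) ℂ) (w : Fin m → ℝ) : ℝ :=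
  ∑ i, ∑ j, w i * w j * (BMat A i j).re

lemma QF_eq_trace {n m : ℕ} (A : Matrix (Fin n) (Fin m) ℂ) (w : Fin m → ℝ) :
    QF A w = ((MM A w)ᴴ * MM A w).trace.re := by
  rw [trace_MM_sq, Complex.re_sum, QF]
  simp only [show hadamard (Aᴴ * A) ((Aᴴ * A).map (starRingEnd ℂ)) = BMat A from rfl]
  refine Finset.sum_congr rfl fun i _ => ?_
  rw [Complex.re_sum]
  refine Finset.sum_congr rfl fun j _ => ?_
  rw [show ((w i : ℂ)) * ((w j : ℂ) * BMat A i j) = ((w i : ℂ)) * ((w j : ℂ)) * BMat A i j by ring]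
  rw [← Complex.ofReal_mul, Complex.re_ofReal_mul]

lemma diag_AMMA_re {n m : ℕ} (A : Matrix (Fin n) (Fin m) ℂ) (y : Fin m → ℝ) (i : Fin m) :
    ((Aᴴ * MM A y * A) i i).re = ∑ j, (BMat A i j).re * y j := by
  rw [diag_AMMA, Complex.re_sum]
  simp only [show hadamard (Aᴴ * A) ((Aᴴ * A).map (starRingEnd ℂ)) = BMat A from rfl]
  refine Finset.sum_congr rfl fun j _ => ?_
  rw [Complex.re_ofReal_mul]
  ring

noncomputable def mvec {n : ℕ} (X : Matrix (Fin n) (Fin n) ℂ) :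
    EuclideanSpace ℂ (Fin n × Fin n) :=
  (WithLp.equiv 2 (Fin n × Fin n → ℂ)).symm (fun p => X p.1 p.2)

noncomputable def cvec {m : ℕ} (v : Fin m → ℝ) : EuclideanSpace ℂ (Fin m) :=
  (WithLp.equiv 2 (Fin m → ℂ)).symm (fun i => (v i : ℂ))

lemma trace_eq_inner {n : ℕ} (Y X : Matrix (Fin n) (Fin n) ℂ) :
    (Yᴴ * X).trace = (inner ℂ (mvec Y) (mvec X) : ℂ) := by
  rw [Matrix.trace]
  simp only [PiLp.inner_apply, RCLike.inner_apply', mvec, PiLp.toLp_apply,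
    Matrix.diag, Matrix.mul_apply, conjTranspose_apply]
  rw [Fintype.sum_prod_type]
  exact Finset.sum_comm

lemma frob_eq_norm {n : ℕ} (X : Matrix (Fin n) (Fin n) ℂ) : frob X = ‖mvec X‖ := by
  rw [frob, @norm_eq_sqrt_re_inner ℂ _ _ _ _ (mvec X)]
  congr 1
  rw [trace_eq_inner X X]
  rfl

lemma enorm_eq_norm {m : ℕ} (v : Fin m → ℝ) : _root_.enorm v = ‖cvec v‖ := by
  rw [_root_.enorm, EuclideanSpace.norm_eq]
  congr 1
  refine Finset.sum_congr rfl fun i _ => ?_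
  rw [cvec, WithLp.equiv_symm_apply, PiLp.toLp_apply, Complex.norm_real, Real.norm_eq_abs, sq_abs]

lemma trace_self_re_nonneg {n : ℕ} (X : Matrix (Fin n) (Fin n) ℂ) :
    0 ≤ (Xᴴ * X).trace.re := by
  rw [trace_eq_inner]
  exact inner_self_nonneg (𝕜 := ℂ)

lemma QF_nonneg {n m : ℕ} (A : Matrix (Fin n) (Fin m) ℂ) (w : Fin m → ℝ) : 0 ≤ QF A w := by
  rw [QF_eq_trace]; exact trace_self_re_nonneg _

lemma frob_nonneg {n : ℕ} (X : Matrix (Fin n) (Fin n) ℂ) : 0 ≤ frob X := Real.sqrt_nonneg _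

lemma frob_sq {n : ℕ} (X : Matrix (Fin n) (Fin n) ℂ) : frob X ^ 2 = (Xᴴ * X).trace.re := by
  rw [frob, Real.sq_sqrt (trace_self_re_nonneg X)]

lemma frob_pos {n : ℕ} {X : Matrix (Fin n) (Fin n) ℂ} (hX : X ≠ 0) : 0 < frob X := by
  rw [frob_eq_norm]
  rw [norm_pos_iff]
  intro h0
  apply hX
  ext i j
  have := congrFun (congrArg (WithLp.equiv 2 (Fin n × Fin n → ℂ)) h0) (i, j)
  simpa [mvec] using this

lemma enorm_nonneg {m : ℕ} (v : Fin m → ℝ) : 0 ≤ _root_.enorm v := Real.sqrt_nonneg _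

lemma enorm_sq {m : ℕ} (v : Fin m → ℝ) : _root_.enorm v ^ 2 = ∑ i, (v i) ^ 2 := by
  rw [_root_.enorm, Real.sq_sqrt]
  exact Finset.sum_nonneg fun i _ => sq_nonneg _

lemma T_cvec {n m : ℕ} (A : Matrix (Fin n) (Fin m) ℂ) (y : Fin m → ℝ) :
    (toEuclideanCLM (𝕜 := ℂ) (BMat A)) (cvec y)
      = cvec (fun i => ∑ j, (BMat A i j).re * y j) := by
  rw [cvec, WithLp.equiv_symm_apply, Matrix.toEuclideanCLM_toLp, cvec, WithLp.equiv_symm_apply]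
  congr 1
  funext i
  rw [show ((BMat A *ᵥ fun j => ((y j : ℝ) : ℂ)) i) = ∑ j, BMat A i j * ((y j : ℝ) : ℂ) from rfl]
  rw [Complex.ofReal_sum]
  refine Finset.sum_congr rfl fun j _ => ?_
  simp [BMat_apply]

lemma re_inner_T {n m : ℕ} (A : Matrix (Fin n) (Fin m) ℂ) (z : EuclideanSpace ℂ (Fin m)) :
    ((inner ℂ z ((toEuclideanCLM (𝕜 := ℂ) (BMat A)) z) : ℂ)).re
      = QF A (fun i => (z i).re) + QF A (fun i => (z i).im) := by
  have hz : z = (WithLp.equiv 2 (Fin m → ℂ)).symm (fun i => z i) := rfl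
  rw [QF, QF, ← Finset.sum_add_distrib]
  conv_lhs => rw [hz, WithLp.equiv_symm_apply, Matrix.toEuclideanCLM_toLp]
  simp only [PiLp.inner_apply, RCLike.inner_apply', PiLp.toLp_apply,
    Matrix.toLin'_apply]
  rw [Complex.re_sum]
  refine Finset.sum_congr rfl fun i _ => ?_
  rw [show ((BMat A *ᵥ fun j => z j) i) = ∑ j, BMat A i j * z j from rfl]
  rw [Finset.mul_sum, Complex.re_sum, ← Finset.sum_add_distrib]
  refine Finset.sum_congr rfl fun j _ => ?_
  rw [BMat_apply]
  simp only [Complex.mul_re, Complex.mul_im, Complex.conj_re, Complex.conj_im,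
    Complex.ofReal_re, Complex.ofReal_im]
  ring

lemma frob_zero {n : ℕ} : frob (0 : Matrix (Fin n) (Fin n) ℂ) = 0 := by
  simp [frob]

lemma QF_eq_re_inner {n m : ℕ} (A : Matrix (Fin n) (Fin m) ℂ) (y : Fin m → ℝ) :
    QF A y = ((inner ℂ (cvec y) ((toEuclideanCLM (𝕜 := ℂ) (BMat A)) (cvec y)) : ℂ)).re := by
  rw [re_inner_T]
  have h1 : (fun i => ((cvec y : EuclideanSpace ℂ (Fin m)) i).re) = y := by
    funext i; simp [cvec, WithLp.equiv_symm_apply]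
  have h2 : (fun i => ((cvec y : EuclideanSpace ℂ (Fin m)) i).im) = (fun _ => (0 : ℝ)) := by
    funext i; simp [cvec, WithLp.equiv_symm_apply]
  rw [h1, h2]
  simp [QF]

lemma gen_cauchy_schwarz {E : Type*} [NormedAddCommGroup E] [InnerProductSpace ℂ E]
    (T : E →L[ℂ] E)
    (hsym : ∀ x y : E, (inner ℂ (T x) y : ℂ) = inner ℂ x (T y))
    (hpos : ∀ x : E, 0 ≤ (inner ℂ x (T x) : ℂ).re) (x y : E) :
    ‖(inner ℂ x (T y) : ℂ)‖ * ‖(inner ℂ y (T x) : ℂ)‖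
      ≤ (inner ℂ x (T x) : ℂ).re * (inner ℂ y (T y) : ℂ).re := by
  let c : PreInnerProductSpace.Core ℂ E :=
  { inner := fun a b => inner ℂ a (T b)
    conj_inner_symm := fun a b => by
      rw [inner_conj_symm (T a) b, hsym]
    re_inner_nonneg := fun a => hpos a
    add_left := fun a b c' => by rw [inner_add_left]
    smul_left := fun a b r => by rw [inner_smul_left] }
  exact @InnerProductSpace.Core.inner_mul_inner_self_le ℂ E _ _ _ c x y

lemma re_le_norm' (z : ℂ) : z.re ≤ ‖z‖ := by
  exact Complex.re_le_norm z

lemma inner_self_re_eq {E : Type*} [NormedAddCommGroup E] [InnerProductSpace ℂ E] (x : E) :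
    ((inner ℂ x x : ℂ)).re = ‖x‖ ^ 2 :=
  inner_self_eq_norm_sq (𝕜 := ℂ) x

theorem stmt_8 {n m : ℕ} (A : Matrix (Fin n) (Fin m) ℂ) :
    opNormA A =
      Real.sqrt ‖Matrix.toEuclideanCLM (𝕜 := ℂ)
        (Matrix.hadamard (Aᴴ * A) ((Aᴴ * A).map (starRingEnd ℂ)))‖ := by
  classical
  have hBM : Matrix.hadamard (Aᴴ * A) ((Aᴴ * A).map (starRingEnd ℂ)) = BMat A := rfl
  rw [hBM]
  set T : EuclideanSpace ℂ (Fin m) →L[ℂ] EuclideanSpace ℂ (Fin m) :=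
    Matrix.toEuclideanCLM (𝕜 := ℂ) (BMat A) with hTdef
  set S : Set ℝ := {t : ℝ | ∃ X : Matrix (Fin n) (Fin n) ℂ, X.IsHermitian ∧ X ≠ 0 ∧
    t = _root_.enorm (fun i => ((Aᴴ * X * A) i i).re) / frob X} with hSdef
  have hop : opNormA A = sSup S := rfl
  rw [hop]
  set s : ℝ := sSup S with hs
  have key1 : ∀ X : Matrix (Fin n) (Fin n) ℂ,
      _root_.enorm (fun i => ((Aᴴ * X * A) i i).re) ≤ Real.sqrt ‖T‖ * frob X := by
    intro X
    set y : Fin m → ℝ := fun i => ((Aᴴ * X * A) i i).re with hy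
    have he0 : 0 ≤ _root_.enorm y := enorm_nonneg y
    have h1 : _root_.enorm y ^ 2 = ((MM A y)ᴴ * X).trace.re := by
      rw [enorm_sq, trace_MM_mul, Complex.re_sum]
      refine Finset.sum_congr rfl fun i _ => ?_
      rw [Complex.re_ofReal_mul, sq]
    have h2 : ((MM A y)ᴴ * X).trace.re ≤ frob (MM A y) * frob X := by
      rw [trace_eq_inner, frob_eq_norm, frob_eq_norm]
      have h2a : ‖(inner ℂ (mvec (MM A y)) (mvec X) : ℂ)‖ ≤ ‖mvec (MM A y)‖ * ‖mvec X‖ :=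
        norm_inner_le_norm _ _
      exact le_trans (re_le_norm' _) h2a
    have h3 : frob (MM A y) ^ 2 ≤ ‖T‖ * _root_.enorm y ^ 2 := by
      rw [frob_sq, ← QF_eq_trace, QF_eq_re_inner]
      calc ((inner ℂ (cvec y) (T (cvec y)) : ℂ)).re
          ≤ ‖(inner ℂ (cvec y) (T (cvec y)) : ℂ)‖ := re_le_norm' _
        _ ≤ ‖cvec y‖ * ‖T (cvec y)‖ := norm_inner_le_norm _ _
        _ ≤ ‖cvec y‖ * (‖T‖ * ‖cvec y‖) :=
            mul_le_mul_of_nonneg_left (T.le_opNorm _) (norm_nonneg _)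
        _ = ‖T‖ * _root_.enorm y ^ 2 := by rw [← enorm_eq_norm]; ring
    have h4 : frob (MM A y) ≤ Real.sqrt ‖T‖ * _root_.enorm y := by
      have h5 := Real.sqrt_le_sqrt h3
      rwa [Real.sqrt_sq (frob_nonneg _), Real.sqrt_mul (norm_nonneg _), Real.sqrt_sq he0] at h5
    rcases eq_or_lt_of_le he0 with he | he
    · rw [← he]
      have : (0:ℝ) ≤ Real.sqrt ‖T‖ * frob X :=
        mul_nonneg (Real.sqrt_nonneg _) (frob_nonneg X)
      linarith
    · have h6 : _root_.enorm y * _root_.enorm y ≤ (Real.sqrt ‖T‖ * frob X) * _root_.enorm y := by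
        calc _root_.enorm y * _root_.enorm y = _root_.enorm y ^ 2 := (sq (_root_.enorm y)).symm
          _ ≤ frob (MM A y) * frob X := h1 ▸ h2
          _ ≤ (Real.sqrt ‖T‖ * _root_.enorm y) * frob X :=
              mul_le_mul_of_nonneg_right h4 (frob_nonneg X)
          _ = (Real.sqrt ‖T‖ * frob X) * _root_.enorm y := by ring
      exact le_of_mul_le_mul_right h6 he
  have hub : ∀ t ∈ S, t ≤ Real.sqrt ‖T‖ := by
    rintro t ⟨X, hXh, hX0, rfl⟩
    rw [div_le_iff₀ (frob_pos hX0)]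
    exact key1 X
  have hbdd : BddAbove S := ⟨_, hub⟩
  have hs0 : 0 ≤ s := by
    rcases Set.eq_empty_or_nonempty S with hSe | ⟨t, ht⟩
    · rw [hs, hSe, Real.sSup_empty]
    · have hle := le_csSup hbdd ht
      obtain ⟨X, -, -, rfl⟩ := ht
      exact le_trans (div_nonneg (enorm_nonneg _) (frob_nonneg _)) hle
  have key2 : ∀ w : Fin m → ℝ, QF A w ≤ s ^ 2 * ‖cvec w‖ ^ 2 := by
    intro w
    rcases eq_or_lt_of_le (QF_nonneg A w) with hq | hq
    · rw [← hq]; positivity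
    · have hfX : frob (MM A w) ^ 2 = QF A w := by rw [frob_sq, QF_eq_trace]
      have hfpos : 0 < frob (MM A w) := by
        rcases eq_or_lt_of_le (frob_nonneg (MM A w)) with h | h
        · exfalso; nlinarith
        · exact h
      have hXne : MM A w ≠ 0 := by
        intro h0
        rw [h0, frob_zero] at hfpos
        exact lt_irrefl _ hfpos
      have hmem : _root_.enorm (fun i => ((Aᴴ * (MM A w) * A) i i).re) / frob (MM A w) ∈ S :=
        ⟨MM A w, MM_isHermitian A w, hXne, rfl⟩
      have hle : _root_.enorm (fun i => ((Aᴴ * (MM A w) * A) i i).re) / frob (MM A w) ≤ s :=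
        le_csSup hbdd hmem
      rw [div_le_iff₀ hfpos] at hle
      have hEn : _root_.enorm (fun i => ((Aᴴ * (MM A w) * A) i i).re) = ‖T (cvec w)‖ := by
        rw [hTdef, T_cvec, ← enorm_eq_norm]
        congr 1
        funext i
        exact diag_AMMA_re A w i
      rw [hEn] at hle
      have hQle : QF A w ≤ ‖cvec w‖ * ‖T (cvec w)‖ := by
        rw [QF_eq_re_inner, ← hTdef]
        exact le_trans (re_le_norm' _) (norm_inner_le_norm _ _)
      have h6 : frob (MM A w) ≤ ‖cvec w‖ * s := by
        have h7 : frob (MM A w) * frob (MM A w) ≤ (‖cvec w‖ * s) * frob (MM A w) := by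
          calc frob (MM A w) * frob (MM A w) = QF A w := by rw [← hfX]; ring
            _ ≤ ‖cvec w‖ * ‖T (cvec w)‖ := hQle
            _ ≤ ‖cvec w‖ * (s * frob (MM A w)) :=
                mul_le_mul_of_nonneg_left hle (norm_nonneg _)
            _ = (‖cvec w‖ * s) * frob (MM A w) := by ring
        exact le_of_mul_le_mul_right h7 hfpos
      calc QF A w = frob (MM A w) ^ 2 := hfX.symm
        _ ≤ (‖cvec w‖ * s) ^ 2 := pow_le_pow_left₀ (frob_nonneg _) h6 2
        _ = s ^ 2 * ‖cvec w‖ ^ 2 := by ring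
  have hsaB : IsSelfAdjoint (BMat A) := by
    show star (BMat A) = BMat A
    rw [Matrix.star_eq_conjTranspose]
    exact BMat_isHermitian A
  have hsa : IsSelfAdjoint T := hsaB.map (Matrix.toEuclideanCLM (𝕜 := ℂ) (n := Fin m))
  have hsym : ∀ x y : EuclideanSpace ℂ (Fin m), (inner ℂ (T x) y : ℂ) = inner ℂ x (T y) :=
    fun x y => (ContinuousLinearMap.isSelfAdjoint_iff_isSymmetric.mp hsa) x y
  have hpos : ∀ z : EuclideanSpace ℂ (Fin m), 0 ≤ ((inner ℂ z (T z) : ℂ)).re := by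
    intro z
    rw [hTdef, re_inner_T]
    exact add_nonneg (QF_nonneg _ _) (QF_nonneg _ _)
  have hqb : ∀ z : EuclideanSpace ℂ (Fin m), ((inner ℂ z (T z) : ℂ)).re ≤ s ^ 2 * ‖z‖ ^ 2 := by
    intro z
    rw [hTdef, re_inner_T]
    have hz : ‖z‖ ^ 2 = ‖cvec (fun i => (z i).re)‖ ^ 2 + ‖cvec (fun i => (z i).im)‖ ^ 2 := by
      rw [← enorm_eq_norm, ← enorm_eq_norm, enorm_sq, enorm_sq, ← Finset.sum_add_distrib]
      rw [show ‖z‖ = Real.sqrt (∑ i, ‖z i‖ ^ 2) from EuclideanSpace.norm_eq z]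
      rw [Real.sq_sqrt (Finset.sum_nonneg fun i _ => sq_nonneg _)]
      refine Finset.sum_congr rfl fun i _ => ?_
      rw [Complex.sq_norm, Complex.normSq_apply]
      ring
    have k1 := key2 (fun i => (z i).re)
    have k2 := key2 (fun i => (z i).im)
    rw [hz]
    nlinarith [k1, k2]
  have hTle : ‖T‖ ≤ s ^ 2 := by
    refine ContinuousLinearMap.opNorm_le_bound T (by positivity) ?_
    intro z
    rcases eq_or_lt_of_le (norm_nonneg (T z)) with hw | hw
    · rw [← hw]; positivity
    · have hcs := gen_cauchy_schwarz T hsym hpos z (T z)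
      have he1 : (inner ℂ (T z) (T z) : ℂ) = inner ℂ z (T (T z)) := hsym z (T z)
      have he2 : ‖T z‖ ^ 2 = ((inner ℂ (T z) (T z) : ℂ)).re := by
        exact (inner_self_re_eq (T z)).symm
      have hb1 := hqb z
      have hb2 := hqb (T z)
      have hp1 := hpos z
      have hp2 := hpos (T z)
      have hn1 : ((inner ℂ (T z) (T z) : ℂ)).re ≤ ‖(inner ℂ z (T (T z)) : ℂ)‖ := by
        rw [he1]; exact re_le_norm' _
      have hn2 : ((inner ℂ (T z) (T z) : ℂ)).re ≤ ‖(inner ℂ (T z) (T z) : ℂ)‖ :=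
        re_le_norm' _
      have hq4 : (‖T z‖ ^ 2) * (‖T z‖ ^ 2)
          ≤ (s ^ 2 * ‖z‖ ^ 2) * (s ^ 2 * ‖T z‖ ^ 2) := by
        calc (‖T z‖ ^ 2) * (‖T z‖ ^ 2)
            ≤ ‖(inner ℂ z (T (T z)) : ℂ)‖ * ‖(inner ℂ (T z) (T z) : ℂ)‖ := by
              rw [he2]
              exact mul_le_mul hn1 hn2 (by rw [← he2]; positivity) (norm_nonneg _)
          _ ≤ ((inner ℂ z (T z) : ℂ)).re * ((inner ℂ (T z) (T (T z)) : ℂ)).re := hcs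
          _ ≤ (s ^ 2 * ‖z‖ ^ 2) * (s ^ 2 * ‖T z‖ ^ 2) :=
              mul_le_mul hb1 hb2 hp2 (by positivity)
      have hq5 : ‖T z‖ ^ 2 * ‖T z‖ ^ 2 ≤ ((s ^ 2 * ‖z‖) ^ 2) * ‖T z‖ ^ 2 := by
        calc ‖T z‖ ^ 2 * ‖T z‖ ^ 2 ≤ (s ^ 2 * ‖z‖ ^ 2) * (s ^ 2 * ‖T z‖ ^ 2) := hq4
          _ = ((s ^ 2 * ‖z‖) ^ 2) * ‖T z‖ ^ 2 := by ring
      have hq6 : ‖T z‖ ^ 2 ≤ (s ^ 2 * ‖z‖) ^ 2 :=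
        le_of_mul_le_mul_right hq5 (pow_pos hw 2)
      have hq7 := Real.sqrt_le_sqrt hq6
      rwa [Real.sqrt_sq (norm_nonneg _), Real.sqrt_sq (by positivity)] at hq7
  apply le_antisymm
  · rcases Set.eq_empty_or_nonempty S with hSe | hSne
    · rw [hs, hSe, Real.sSup_empty]
      exact Real.sqrt_nonneg _
    · exact csSup_le hSne hub
  · have h1 : Real.sqrt ‖T‖ ≤ Real.sqrt (s ^ 2) := Real.sqrt_le_sqrt hTle
    rwa [Real.sqrt_sq hs0] at h1
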